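/- Let P : A ⥤ A be generating with Nakayama functor ν and I = ν∘P. An object A ∈ A is isomorphic to ν(A') for some A' if and only if there exists an exact sequence J₀ → J₁ → A → 0 with J₀, J₁ I-injective (summands of objects I(B)). Dually, A ≅ ν⁻(A') for some A' iff there is an exact sequence 0 → A → Q₀ → Q₁ with Q₀, Q₁ P-projective. -/

import Mathlib

open CategoryTheory Category Limits

section

variable {A : Type*} [Category A] [Abelian A]

/-- An object is `P`-projective if it is a direct summand of an object `P(Y)`. -/
def IsPProjObj (P : A ⥤ A) (Q : A) : Prop :=
  ∃ (Y : A) (i : Q ⟶ P.obj Y) (r : P.obj Y ⟶ Q), i ≫ r = 𝟙 Q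

/-- An object is `I`-injective if it is a direct summand of an object `I(Y)`. -/
def IsIInjObj (I : A ⥤ A) (J : A) : Prop :=
  ∃ (Y : A) (i : J ⟶ I.obj Y) (r : I.obj Y ⟶ J), i ≫ r = 𝟙 J

omit [Abelian A] in
/-- If a natural transformation is an isomorphism at `Z` and `J` is a retract of `Z`,
then it is an isomorphism at `J`. -/
lemma isIso_app_of_retract {F G : A ⥤ A} (α : F ⟶ G) {J Z : A} (i : J ⟶ Z) (r : Z ⟶ J)
    (hir : i ≫ r = 𝟙 J) [IsIso (α.app Z)] : IsIso (α.app J) := by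
  refine ⟨⟨G.map i ≫ inv (α.app Z) ≫ F.map r, ?_, ?_⟩⟩
  · rw [← assoc, ← assoc, ← α.naturality i, assoc, assoc, IsIso.hom_inv_id_assoc,
      ← F.map_comp, hir, F.map_id]
  · rw [assoc, assoc, α.naturality r, ← assoc (inv (α.app Z)), IsIso.inv_hom_id, id_comp,
      ← G.map_comp, hir, G.map_id]

/-- Let `P` be generating with Nakayama functor `ν` and `I = ν ∘ P`.
An object `X` is isomorphic to `ν(A')` for some `A'` iff there is an exact sequence
`J₀ → J₁ → X → 0` with `J₀, J₁` `I`-injective; dually, `X ≅ ν⁻(A')` for some `A'`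
iff there is an exact sequence `0 → X → Q₀ → Q₁` with `Q₀, Q₁` `P`-projective. -/
theorem image_nu_characterization
    (P ν νinv : A ⥤ A)
    (hgen : ∀ X : A, ∃ (Y : A) (p : P.obj Y ⟶ X), Epi p)
    (adjν : ν ⊣ νinv)
    (adjP : P ⊣ (P ⋙ ν))
    (hunit : ∀ X : A, IsIso (adjν.unit.app (P.obj X)))
    (X : A) :
    ((∃ Y : A, Nonempty (X ≅ ν.obj Y)) ↔
      ∃ (J₀ J₁ : A) (f : J₀ ⟶ J₁) (g : J₁ ⟶ X) (w : f ≫ g = 0),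
        IsIInjObj (P ⋙ ν) J₀ ∧ IsIInjObj (P ⋙ ν) J₁ ∧ Epi g ∧
        (ShortComplex.mk f g w).Exact) ∧
    ((∃ Y : A, Nonempty (X ≅ νinv.obj Y)) ↔
      ∃ (Q₀ Q₁ : A) (f : X ⟶ Q₀) (g : Q₀ ⟶ Q₁) (w : f ≫ g = 0),
        IsPProjObj P Q₀ ∧ IsPProjObj P Q₁ ∧ Mono f ∧
        (ShortComplex.mk f g w).Exact) := by
  haveI := adjν.isLeftAdjoint
  haveI := adjν.isRightAdjoint
  haveI := adjν.leftAdjoint_preservesColimits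
  haveI := adjν.rightAdjoint_preservesLimits
  -- the unit of `adjP` is a monomorphism at every object
  have monoUnit : ∀ N : A, Mono (adjP.unit.app N) := by
    intro N
    constructor
    intro Z g₁ g₂ hgg
    have h1 : ∀ g : Z ⟶ N, g ≫ adjP.unit.app N = (adjP.homEquiv Z (P.obj N)) (P.map g) := by
      intro g
      rw [Adjunction.homEquiv_unit]
      simpa using adjP.unit.naturality g
    have hP : P.map g₁ = P.map g₂ :=
      (adjP.homEquiv Z (P.obj N)).injective (by rw [← h1, ← h1, hgg])
    obtain ⟨C, t, ht⟩ := hgen Z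
    haveI := ht
    have h2 : t ≫ g₁ = t ≫ g₂ := by
      apply (adjP.homEquiv C N).injective
      rw [Adjunction.homEquiv_unit, Adjunction.homEquiv_unit]
      congr 1
      show (P ⋙ ν).map (t ≫ g₁) = (P ⋙ ν).map (t ≫ g₂)
      simp only [Functor.map_comp, Functor.comp_map, hP]
    exact (cancel_epi t).mp h2
  constructor
  · -- first statement: essential image of ν
    constructor
    · -- forward
      rintro ⟨Y, ⟨e⟩⟩
      obtain ⟨A₁, p, hp⟩ := hgen Y
      haveI := hp
      obtain ⟨A₀, q, hq⟩ := hgen (kernel p)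
      haveI := hq
      have w₀ : (q ≫ kernel.ι p) ≫ p = 0 := by simp [kernel.condition]
      have hS₀ : (ShortComplex.mk (q ≫ kernel.ι p) p w₀).Exact := by
        rw [ShortComplex.exact_iff_epi_kernel_lift]
        have hl : kernel.lift p (q ≫ kernel.ι p) w₀ = q := by
          ext; simp
        rw [hl]; exact hq
      have hmap : ((ShortComplex.mk (q ≫ kernel.ι p) p w₀).map ν).Exact :=
        hS₀.map_of_epi_of_preservesCokernel ν hp inferInstance
      have w : ν.map (q ≫ kernel.ι p) ≫ (ν.map p ≫ e.inv) = 0 := by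
        rw [← assoc, ← ν.map_comp, w₀, Functor.map_zero, zero_comp]
      refine ⟨ν.obj (P.obj A₀), ν.obj (P.obj A₁), ν.map (q ≫ kernel.ι p),
        ν.map p ≫ e.inv, w, ⟨A₀, 𝟙 _, 𝟙 _, by simp⟩, ⟨A₁, 𝟙 _, 𝟙 _, by simp⟩,
        inferInstance, ?_⟩
      have φ : (ShortComplex.mk (q ≫ kernel.ι p) p w₀).map ν ≅
          ShortComplex.mk (ν.map (q ≫ kernel.ι p)) (ν.map p ≫ e.inv) w :=
        ShortComplex.isoMk (Iso.refl _) (Iso.refl _) e.symm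
          (by simp; exact (id_comp _).trans (comp_id _).symm) (by simp; exact id_comp _)
      exact (ShortComplex.exact_iff_of_iso φ).1 hmap
    · -- backward
      rintro ⟨J₀, J₁, f, g, w, ⟨B₀, i₀, r₀, hir₀⟩, ⟨B₁, i₁, r₁, hir₁⟩, hg, hex⟩
      haveI := hg
      have hcu : ∀ B : A, IsIso (adjν.counit.app ((P ⋙ ν).obj B)) := by
        intro B
        haveI := hunit B
        have tri := adjν.left_triangle_components (P.obj B)
        have heq : adjν.counit.app ((P ⋙ ν).obj B) = inv (ν.map (adjν.unit.app (P.obj B))) :=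
          IsIso.eq_inv_of_hom_inv_id tri
        rw [heq]
        infer_instance
      haveI := hcu B₀
      haveI := hcu B₁
      haveI h₀ : IsIso (adjν.counit.app J₀) := isIso_app_of_retract adjν.counit i₀ r₀ hir₀
      haveI h₁ : IsIso (adjν.counit.app J₁) := isIso_app_of_retract adjν.counit i₁ r₁ hir₁
      have e₁ : ν.obj (cokernel (νinv.map f)) ≅ cokernel (ν.map (νinv.map f)) :=
        PreservesCokernel.iso ν _
      have e₂ : cokernel ((νinv ⋙ ν).map f) ≅ cokernel f :=
        cokernel.mapIso _ _ (asIso (adjν.counit.app J₀)) (asIso (adjν.counit.app J₁))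
          (by simp)
      have e₃ : cokernel f ≅ X :=
        (colimit.isColimit _).coconePointUniqueUpToIso hex.gIsCokernel
      exact ⟨cokernel (νinv.map f), ⟨e₃.symm ≪≫ e₂.symm ≪≫ e₁.symm⟩⟩
  · -- second statement: essential image of νinv
    constructor
    · -- forward
      rintro ⟨M, ⟨e⟩⟩
      haveI := monoUnit M
      set C := cokernel (adjP.unit.app M) with hC
      haveI := monoUnit C
      set d : (P ⋙ ν).obj (P.obj M) ⟶ (P ⋙ ν).obj (P.obj C) :=
        cokernel.π (adjP.unit.app M) ≫ adjP.unit.app C with hd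
      have w₁ : adjP.unit.app M ≫ d = 0 := by
        rw [hd, ← assoc, cokernel.condition, zero_comp]
      have hS₁ : (ShortComplex.mk (adjP.unit.app M) d w₁).Exact := by
        rw [ShortComplex.exact_iff_mono_cokernel_desc]
        have hl : cokernel.desc (adjP.unit.app M) d w₁ = adjP.unit.app C := by
          ext; simp [hd]
        rw [hl]; infer_instance
      have hmap : ((ShortComplex.mk (adjP.unit.app M) d w₁).map νinv).Exact :=
        hS₁.map_of_mono_of_preservesKernel νinv (monoUnit M) inferInstance
      have w : (e.hom ≫ νinv.map (adjP.unit.app M)) ≫ νinv.map d = 0 := by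
        rw [assoc, ← νinv.map_comp, w₁, Functor.map_zero, comp_zero]
      haveI : Mono (νinv.map (adjP.unit.app M)) := νinv.map_mono _
      refine ⟨νinv.obj ((P ⋙ ν).obj (P.obj M)), νinv.obj ((P ⋙ ν).obj (P.obj C)),
        e.hom ≫ νinv.map (adjP.unit.app M), νinv.map d, w, ?_, ?_, mono_comp _ _, ?_⟩
      · haveI := hunit (P.obj M)
        exact ⟨P.obj M, inv (adjν.unit.app (P.obj (P.obj M))), adjν.unit.app (P.obj (P.obj M)),
          IsIso.inv_hom_id _⟩
      · haveI := hunit (P.obj C)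
        exact ⟨P.obj C, inv (adjν.unit.app (P.obj (P.obj C))), adjν.unit.app (P.obj (P.obj C)),
          IsIso.inv_hom_id _⟩
      · have φ : ShortComplex.mk (e.hom ≫ νinv.map (adjP.unit.app M)) (νinv.map d) w ≅
            (ShortComplex.mk (adjP.unit.app M) d w₁).map νinv :=
          ShortComplex.isoMk e (Iso.refl _) (Iso.refl _) (by simp; exact (comp_id _).symm)
            (by simp; exact (id_comp _).trans (comp_id _).symm)
        exact (ShortComplex.exact_iff_of_iso φ).2 hmap
    · -- backward
      rintro ⟨Q₀, Q₁, f, g, w, ⟨B₀, i₀, r₀, hir₀⟩, ⟨B₁, i₁, r₁, hir₁⟩, hf, hex⟩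
      haveI := hf
      haveI := hunit B₀
      haveI := hunit B₁
      haveI h₀ : IsIso (adjν.unit.app Q₀) := isIso_app_of_retract adjν.unit i₀ r₀ hir₀
      haveI h₁ : IsIso (adjν.unit.app Q₁) := isIso_app_of_retract adjν.unit i₁ r₁ hir₁
      have e₁ : νinv.obj (kernel (ν.map g)) ≅ kernel (νinv.map (ν.map g)) :=
        PreservesKernel.iso νinv _
      have e₂ : kernel g ≅ kernel ((ν ⋙ νinv).map g) :=
        kernel.mapIso _ _ (asIso (adjν.unit.app Q₀)) (asIso (adjν.unit.app Q₁))
          (by simp)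
      have e₃ : X ≅ kernel g :=
        hex.fIsKernel.conePointUniqueUpToIso (limit.isLimit _)
      exact ⟨kernel (ν.map g), ⟨e₃ ≪≫ e₂ ≪≫ e₁.symm⟩⟩

end
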